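/- arXiv:1703.02774 — 3 statements merged into one kernel-verified Lean document; each statement's English description precedes it below -/
import Mathlib

section
/- For any β-(1,0) tree B' whose root has a unique child which is an internal node, there is a unique integer j with 1 ≤ j ≤ root(Π_B(B')) such that B' = Δ_B(Π_B(B'), j). -/
/-- Rooted plane trees with a natural-number label on every node. -/
inductive BTree where
  | node : ℕ → List BTree → BTree

namespace BTree

def label : BTree → ℕ
  | node l _ => l

def children : BTree → List BTree
  | node _ c => c

/-- Sum of the labels of a list of trees (used for the children of a node). -/
def childSum (c : List BTree) : ℕ := (c.map label).sum

end BTree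

/-- The β-(1,0) condition for non-root subtrees: leaves are labeled 1, and internal
nodes carry a label between 1 and the sum of the labels of their children. -/
inductive IsBetaSub : BTree → Prop where
  | leaf : IsBetaSub (.node 1 [])
  | node {l : ℕ} {c : List BTree} (hne : c ≠ []) (h1 : 1 ≤ l)
      (h2 : l ≤ BTree.childSum c) (hc : ∀ t ∈ c, IsBetaSub t) : IsBetaSub (.node l c)

/-- A β-(1,0) tree: the root is internal, its label is the sum of the labels of its
children, and all subtrees satisfy the β-(1,0) condition. -/
def IsBeta : BTree → Prop
  | .node l c => c ≠ [] ∧ l = BTree.childSum c ∧ ∀ t ∈ c, IsBetaSub t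

/-- The label of the root. -/
def rootLabel (B : BTree) : ℕ := B.label

/-- Δ_B(B,i): attach the root of `B` to a new vertex as its unique child, labeling
both the old and the new root by `i`. -/
def deltaB : BTree → ℕ → BTree
  | .node _ c, i => .node i [.node i c]

/-- Π_B: remove the root (which has a unique child) and relabel the new root by
the sum of the labels of its children. -/
def piB : BTree → BTree
  | .node _ [.node _ c] => .node (BTree.childSum c) c
  | t => t

theorem stmt1 (l : ℕ) (c : BTree) (hint : c.children ≠ [])
    (hB : IsBeta (.node l [c])) :
    ∃! j : ℕ, 1 ≤ j ∧ j ≤ rootLabel (piB (.node l [c])) ∧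
      BTree.node l [c] = deltaB (piB (.node l [c])) j := by
  obtain ⟨m, cc⟩ := c
  simp only [BTree.children] at hint
  obtain ⟨-, hl, hc⟩ := hB
  have hsub := hc _ (List.mem_singleton.mpr rfl)
  have hml : l = m := by
    simp [BTree.childSum, BTree.label] at hl; omega
  subst hml
  cases hsub with
  | leaf => exact absurd rfl hint
  | node hne h1 h2 hc' =>
    refine ⟨l, ⟨h1, ?_, ?_⟩, ?_⟩
    · simpa [piB, rootLabel, BTree.label] using h2
    · simp [piB, deltaB]
    · rintro j ⟨-, -, hj⟩
      simp [piB, deltaB] at hj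
      omega
end

section
/- For β-(1,0) trees B1, B2 and an integer i with 1 ≤ i ≤ root(B1), the tree ⊕_B(B1, i, B2) obtained by identifying the roots of Δ_B(B1,i) and B2 (with the old root of B1 as leftmost child of the merged root, whose label is the sum of its children's labels) is a β-(1,0) tree satisfying hd_B(⊕_B(B1,i,B2)) = B1, tl_B(⊕_B(B1,i,B2)) = B2 and root(⊕_B(B1,i,B2)) = i + root(B2). -/
/-- ⊕_B(B1,i,B2): identify the roots of Δ_B(B1,i) and B2, with the old root of B1
(relabeled i) as leftmost child of the merged root, whose label is the sum of the
labels of its children. -/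
def oplusB (B1 : BTree) (i : ℕ) (B2 : BTree) : BTree :=
  .node (BTree.childSum (.node i B1.children :: B2.children))
    (.node i B1.children :: B2.children)

/-- hd_B: the subtree rooted at the leftmost child of the root, with its root label
adjusted to the sum of the labels of its children. -/
def hdB : BTree → BTree
  | .node _ (.node _ c :: _) => .node (BTree.childSum c) c
  | t => t

/-- tl_B: the tree remaining after removing the leftmost child of the root, with the
root label adjusted to the sum of the labels of its children. -/
def tlB : BTree → BTree
  | .node _ (_ :: rest) => .node (BTree.childSum rest) rest
  | t => t

theorem stmt2 (B1 B2 : BTree) (i : ℕ) (h1 : IsBeta B1) (h2 : IsBeta B2)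
    (hi1 : 1 ≤ i) (hi2 : i ≤ rootLabel B1) :
    IsBeta (oplusB B1 i B2) ∧ hdB (oplusB B1 i B2) = B1 ∧
      tlB (oplusB B1 i B2) = B2 ∧ rootLabel (oplusB B1 i B2) = i + rootLabel B2 := by
  obtain ⟨l1, c1⟩ := B1
  obtain ⟨l2, c2⟩ := B2
  obtain ⟨hne1, hsum1, hsub1⟩ := h1
  obtain ⟨hne2, hsum2, hsub2⟩ := h2
  simp only [rootLabel, BTree.label] at hi2 ⊢
  subst hsum1 hsum2
  refine ⟨⟨by simp, rfl, ?_⟩, ?_, ?_, ?_⟩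
  · intro t ht
    rcases List.mem_cons.mp ht with h | h
    · subst h
      exact IsBetaSub.node hne1 hi1 hi2 hsub1
    · exact hsub2 t h
  · simp [oplusB, hdB, BTree.children]
  · simp [oplusB, tlB, BTree.children]
  · simp [oplusB, BTree.children, BTree.childSum, BTree.label]
end

section
/- The transformation mir on Dyck paths, defined recursively by mir(ε) = ε and mir(D1 u D2 d) = mir(D2) u mir(D1) d (where D = D1 u D2 d is the unique decomposition with D1, D2 Dyck paths, D2 starting at the last non-initial contact of D), is an involution on Dyck paths of size n for every n. -/
/-- A Dyck path: a word in `u = true`, `d = false` with equally many `u`'s and `d`'s,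
every prefix of which has at least as many `u`'s as `d`'s. -/
def IsDyck (w : List Bool) : Prop :=
  w.count true = w.count false ∧ ∀ p, p <+: w → p.count false ≤ p.count true

/-- The number of non-initial contacts of a path: the number of nonempty balanced
prefixes. -/
def ncontacts (w : List Bool) : ℕ :=
  ((List.range w.length).filter
    (fun j => (w.take (j + 1)).count true = (w.take (j + 1)).count false)).length

/-- The involution `mir` on Dyck paths, defined recursively by `mir ε = ε` and
`mir (D₁ u D₂ d) = mir D₂ u mir D₁ d`, where a nonempty Dyck path is uniquely
written `D₁ u D₂ d` with `D₁, D₂` Dyck paths and `D₂` starting right after the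
last non-initial contact before the endpoint (so `D₁` is the longest proper
balanced prefix). -/
def mir (w : List Bool) : List Bool :=
  if hw : w = [] then []
  else
    let e := w.dropLast
    let j := ((List.range e.length).filter
      (fun j => (e.take j).count true = (e.take j).count false)).foldr max 0
    mir (e.drop (j + 1)) ++ true :: (mir (e.take j) ++ [false])
termination_by w.length
decreasing_by
  all_goals
    have hp := List.length_pos_iff.mpr hw
    simp only [List.length_drop, List.length_take, List.length_dropLast]
    omega

lemma count_tf (l : List Bool) : l.count true + l.count false = l.length := by
  induction l with
  | nil => simp
  | cons a t ih => cases a <;> simp [List.count_cons] <;> omega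

lemma foldr_max_mem (l : List ℕ) (h : l ≠ []) : l.foldr max 0 ∈ l := by
  induction l with
  | nil => simp at h
  | cons a t ih =>
    cases t with
    | nil => simp
    | cons b s =>
      have ht : (b :: s).foldr max 0 ∈ b :: s := ih (by simp)
      show max a ((b :: s).foldr max 0) ∈ a :: b :: s
      rcases le_total a ((b :: s).foldr max 0) with h1 | h1
      · rw [max_eq_right h1]
        exact List.mem_cons_of_mem _ ht
      · rw [max_eq_left h1]
        exact List.mem_cons_self

lemma le_foldr_max {l : List ℕ} {a : ℕ} (h : a ∈ l) : a ≤ l.foldr max 0 := by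
  induction l with
  | nil => simp at h
  | cons b t ih =>
    rcases List.mem_cons.1 h with rfl | h
    · exact le_max_left _ _
    · exact le_trans (ih h) (le_max_right _ _)

lemma foldr_max_le {l : List ℕ} {m : ℕ} (h : ∀ x ∈ l, x ≤ m) : l.foldr max 0 ≤ m := by
  induction l with
  | nil => simp
  | cons b t ih =>
    simp only [List.foldr_cons, max_le_iff]
    exact ⟨h b List.mem_cons_self, ih fun x hx => h x (List.mem_cons_of_mem _ hx)⟩

/-- crossing lemma -/
lemma crossing {p : List Bool} (h : p.count true < p.count false) :
    ∃ k ≤ p.length, (p.take k).count false = (p.take k).count true + 1 := by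
  have hP : ∃ k, (p.take k).count true < (p.take k).count false := by
    exact ⟨p.length, by simpa using h⟩
  classical
  have hk : (p.take (Nat.find hP)).count true < (p.take (Nat.find hP)).count false :=
    Nat.find_spec hP
  have hk0 : Nat.find hP ≠ 0 := by
    intro h0
    rw [h0] at hk; simp at hk
  obtain ⟨m, hm1⟩ : ∃ m, Nat.find hP = m + 1 :=
    ⟨Nat.find hP - 1, (Nat.succ_pred_eq_of_ne_zero hk0).symm⟩
  rw [hm1] at hk
  have hm : ¬ (p.take m).count true < (p.take m).count false :=
    Nat.find_min hP (by omega)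
  have hts := List.take_succ (l := p) (i := m)
  have hle : m + 1 ≤ p.length := by
    by_contra hgt
    push_neg at hgt
    have : p.take (m + 1) = p.take m := by
      rw [List.take_of_length_le (by omega), List.take_of_length_le (by omega)]
    rw [this] at hk; omega
  refine ⟨m + 1, hle, ?_⟩
  have h1 : (p.take (m+1)).count false ≤ (p.take m).count false + 1 := by
    rw [hts, List.count_append]
    have : (p[m]?.toList).count false ≤ p[m]?.toList.length := List.count_le_length
    have hl : p[m]?.toList.length ≤ 1 := by cases p[m]? <;> simp
    omega
  have h2 : (p.take m).count true ≤ (p.take (m+1)).count true := by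
    rw [hts, List.count_append]; omega
  omega

/-- Basic facts about the decomposition of a nonempty Dyck path. -/
lemma decomp (w : List Bool) (hw : w ≠ []) (h : IsDyck w) :
    ∀ e j, e = w.dropLast →
      j = ((List.range e.length).filter
        (fun j => (e.take j).count true = (e.take j).count false)).foldr max 0 →
      w = e.take j ++ true :: (e.drop (j + 1) ++ [false]) ∧
      IsDyck (e.take j) ∧ IsDyck (e.drop (j + 1)) := by
  intro e j he hj
  -- last letter is false
  have hlast : w = e ++ [false] := by
    have hsplit : e ++ [w.getLast hw] = w := by
      rw [he]; exact List.dropLast_append_getLast hw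
    rcases Bool.eq_false_or_eq_true (w.getLast hw) with hb | hb
    · exfalso
      have hpre : e <+: w := he ▸ List.dropLast_prefix w
      have h2 := h.2 e hpre
      have h1 := h.1
      have hc : w.count true = e.count true + 1 ∧ w.count false = e.count false := by
        rw [← hsplit, hb]; constructor <;> simp [List.count_append]
      omega
    · rw [hb] at hsplit; exact hsplit.symm
  have hec : e.count true = e.count false + 1 := by
    have := h.1
    rw [hlast] at this
    simp [List.count_append] at this
    omega
  have hepos : 0 < e.length := by
    have := count_tf e
    by_contra h0
    push_neg at h0
    interval_cases he' : e.length <;> omega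
  set S := ((List.range e.length).filter
      (fun j => (e.take j).count true = (e.take j).count false)) with hS
  have h0S : 0 ∈ S := by
    rw [hS, List.mem_filter]
    exact ⟨List.mem_range.2 hepos, by simp⟩
  have hjS : j ∈ S := hj ▸ foldr_max_mem S (by intro h0; rw [h0] at h0S; simp at h0S)
  rw [hS, List.mem_filter, List.mem_range] at hjS
  obtain ⟨hjlt, hjbal'⟩ := hjS
  have hjbal : (e.take j).count true = (e.take j).count false := by
    simpa using hjbal'
  have hmax : ∀ L, L < e.length → (e.take L).count true = (e.take L).count false → L ≤ j := by
    intro L hL hbal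
    rw [hj]
    exact le_foldr_max (by rw [hS, List.mem_filter, List.mem_range]; exact ⟨hL, by simpa⟩)
  -- middle letter is true
  have hts : e.take (j + 1) = e.take j ++ [e[j]] := by
    rw [List.take_succ, List.getElem?_eq_getElem hjlt]; rfl
  have hjtrue : e[j] = true := by
    rcases Bool.eq_false_or_eq_true e[j] with hb | hb
    · exact hb
    · exfalso
      have hpre : e.take (j+1) <+: w :=
        (List.take_prefix _ _).trans (he ▸ List.dropLast_prefix w)
      have h2 := h.2 _ hpre
      rw [hts, hb] at h2
      simp only [List.count_append, List.count_singleton, List.count_cons] at h2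
      simp at h2
      omega
  have hesplit : e = e.take j ++ true :: e.drop (j + 1) := by
    conv_lhs => rw [← List.take_append_drop (j+1) e]
    rw [hts, hjtrue]
    simp
  have hw_eq : w = e.take j ++ true :: (e.drop (j + 1) ++ [false]) := by
    rw [hlast]
    conv_lhs => rw [hesplit]
    simp
  -- D1 is Dyck
  have hD1 : IsDyck (e.take j) := by
    refine ⟨hjbal, fun p hp => ?_⟩
    exact h.2 p (hp.trans ((List.take_prefix _ _).trans (he ▸ List.dropLast_prefix w)))
  -- counts of D2
  have hcnt : (e.drop (j+1)).count true = (e.drop (j+1)).count false := by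
    have : e.count true = (e.take j).count true + 1 + (e.drop (j+1)).count true ∧
        e.count false = (e.take j).count false + (e.drop (j+1)).count false := by
      constructor <;> (conv_lhs => rw [hesplit]) <;>
        simp [List.count_append, List.count_cons] <;> omega
    omega
  have hD2 : IsDyck (e.drop (j+1)) := by
    refine ⟨hcnt, fun p hp => ?_⟩
    by_contra hbad
    push_neg at hbad
    obtain ⟨k, hk, hq⟩ := crossing hbad
    set q := p.take k with hqdef
    -- q = (e.drop (j+1)).take k
    have hqtake : q = (e.drop (j+1)).take k := by
      rw [hqdef, List.prefix_iff_eq_take.1 hp, List.take_take]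
      congr 1
      omega
    have hL : e.take (j + 1 + k) = e.take j ++ true :: q := by
      conv_lhs => rw [hesplit]
      have : e.take j ++ true :: e.drop (j+1) = (e.take j ++ [true]) ++ e.drop (j+1) := by simp
      rw [this]
      have hlen : j + 1 + k = (e.take j ++ [true]).length + k := by
        simp [List.length_take]
        omega
      rw [hlen, List.take_length_add_append]
      simp [hqtake]
    have hbalL : (e.take (j+1+k)).count true = (e.take (j+1+k)).count false := by
      rw [hL]
      simp [List.count_append, List.count_cons]
      omega
    have hlenle : j + 1 + k ≤ e.length := by
      have h1 : p.length ≤ (e.drop (j+1)).length := hp.length_le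
      simp only [List.length_drop] at h1
      omega
    have hlenlt : j + 1 + k < e.length := by
      rcases lt_or_eq_of_le hlenle with h' | h'
      · exact h'
      · exfalso
        rw [h', List.take_length] at hbalL
        omega
    have := hmax _ hlenlt hbalL
    omega
  exact ⟨hw_eq, hD1, hD2⟩

lemma prefix_concat_bound {D2 q : List Bool} (h2 : IsDyck D2) (hq : q <+: D2 ++ [false]) :
    q.count false ≤ q.count true + 1 := by
  rcases le_or_gt q.length D2.length with h' | h'
  · have : q <+: D2 := List.prefix_of_prefix_length_le hq (D2.prefix_append [false]) h'
    have := h2.2 q this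
    omega
  · have hlen : q.length = D2.length + 1 := by
      have := hq.length_le
      simp at this
      omega
    have : q = D2 ++ [false] := by
      rw [List.prefix_iff_eq_take.1 hq, hlen]
      simp
    rw [this]
    have := h2.1
    simp [List.count_append]
    omega

lemma dyck_glue {D1 D2 : List Bool} (h1 : IsDyck D1) (h2 : IsDyck D2) :
    IsDyck (D1 ++ true :: (D2 ++ [false])) := by
  constructor
  · simp [List.count_append, List.count_cons, h1.1, h2.1]
  · intro p hp
    have hp' : p = (D1 ++ true :: (D2 ++ [false])).take p.length :=
      List.prefix_iff_eq_take.1 hp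
    rcases le_or_gt p.length D1.length with h' | h'
    · have hpd : p <+: D1 :=
        List.prefix_of_prefix_length_le hp (D1.prefix_append _) h'
      exact h1.2 p hpd
    · have hsplit : p = D1 ++ (true :: (D2 ++ [false])).take (p.length - D1.length) := by
        rw [hp']
        have hlen : p.length = D1.length + (p.length - D1.length) := by omega
        rw [hlen, List.take_length_add_append]
        simp
      set m := p.length - D1.length with hm
      have hm1 : m = (m - 1) + 1 := by omega
      have htc : (true :: (D2 ++ [false])).take m = true :: (D2 ++ [false]).take (m - 1) := by
        rw [hm1]; rfl
      set q := (D2 ++ [false]).take (m - 1) with hqdef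
      have hqb : q.count false ≤ q.count true + 1 :=
        prefix_concat_bound h2 (by rw [hqdef]; exact List.take_prefix _ _)
      rw [hsplit, htc]
      simp [List.count_append, List.count_cons, h1.1]
      omega

lemma mir_nil : mir [] = [] := by rw [mir]; simp

lemma mir_glue (D1 D2 : List Bool) (h1 : IsDyck D1) (h2 : IsDyck D2) :
    mir (D1 ++ true :: (D2 ++ [false])) = mir D2 ++ true :: (mir D1 ++ [false]) := by
  have hwne : D1 ++ true :: (D2 ++ [false]) ≠ [] := by simp
  rw [mir, dif_neg hwne]
  have he : (D1 ++ true :: (D2 ++ [false])).dropLast = D1 ++ true :: D2 := by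
    have : D1 ++ true :: (D2 ++ [false]) = (D1 ++ true :: D2) ++ [false] := by simp
    rw [this, List.dropLast_concat]
  rw [he]
  set e := D1 ++ true :: D2 with hedef
  have helen : e.length = D1.length + 1 + D2.length := by simp [hedef]; omega
  have hkey : ((List.range e.length).filter
      (fun j => (e.take j).count true = (e.take j).count false)).foldr max 0 = D1.length := by
    apply le_antisymm
    · apply foldr_max_le
      intro x hx
      rw [List.mem_filter, List.mem_range] at hx
      obtain ⟨hx1, hx2⟩ := hx
      have hbal : (e.take x).count true = (e.take x).count false := by simpa using hx2
      by_contra hgt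
      push_neg at hgt
      have hxsplit : e.take x = D1 ++ true :: D2.take (x - D1.length - 1) := by
        have hx3 : x = D1.length + (x - D1.length) := by omega
        have hm1 : x - D1.length = (x - D1.length - 1) + 1 := by omega
        conv_lhs => rw [hedef, hx3, List.take_length_add_append]
        rw [hm1, List.take_succ_cons]
        congr 3
      rw [hxsplit] at hbal
      have := h2.2 _ (List.take_prefix (x - D1.length - 1) D2)
      simp [List.count_append, List.count_cons, h1.1] at hbal
      omega
    · apply le_foldr_max
      rw [List.mem_filter, List.mem_range]
      constructor
      · omega
      · have : e.take D1.length = D1 := by rw [hedef, List.take_left]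
        rw [this]
        simpa using h1.1
  have hdrop : e.drop (D1.length + 1) = D2 := by
    have : e = (D1 ++ [true]) ++ D2 := by simp [hedef]
    rw [this]
    have : D1.length + 1 = (D1 ++ [true]).length := by simp
    rw [this, List.drop_left]
  have htake : e.take D1.length = D1 := by rw [hedef, List.take_left]
  simp only [hkey, hdrop, htake]

theorem stmt7 (w : List Bool) (h : IsDyck w) :
    IsDyck (mir w) ∧ (mir w).count true = w.count true ∧ mir (mir w) = w := by
  suffices H : ∀ n w, w.length ≤ n → IsDyck w →
      IsDyck (mir w) ∧ (mir w).count true = w.count true ∧ mir (mir w) = w from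
    H w.length w le_rfl h
  intro n
  induction n with
  | zero =>
    intro w hw _
    have : w = [] := by
      cases w with
      | nil => rfl
      | cons a t => simp at hw
    subst this
    rw [mir_nil, mir_nil]
    exact ⟨⟨rfl, fun p hp => by simp [List.prefix_nil.1 hp]⟩, rfl, rfl⟩
  | succ n ih =>
    intro w hw hD
    by_cases hwn : w = []
    · subst hwn
      rw [mir_nil, mir_nil]
      exact ⟨⟨rfl, fun p hp => by simp [List.prefix_nil.1 hp]⟩, rfl, rfl⟩
    · obtain ⟨hw_eq, hD1, hD2⟩ := decomp w hwn hD _ _ rfl rfl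
      set e := w.dropLast with he
      set j := ((List.range e.length).filter
        (fun j => (e.take j).count true = (e.take j).count false)).foldr max 0 with hj
      set D1 := e.take j with hD1d
      set D2 := e.drop (j + 1) with hD2d
      have hmirw : mir w = mir D2 ++ true :: (mir D1 ++ [false]) := by
        rw [hw_eq]; exact mir_glue D1 D2 hD1 hD2
      have hlen : D1.length + D2.length + 2 = w.length := by
        have := congrArg List.length hw_eq
        simp at this
        omega
      have i1 := ih D1 (by omega) hD1
      have i2 := ih D2 (by omega) hD2
      obtain ⟨m1D, m1c, m1i⟩ := i1
      obtain ⟨m2D, m2c, m2i⟩ := i2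
      refine ⟨?_, ?_, ?_⟩
      · rw [hmirw]
        exact dyck_glue m2D m1D
      · rw [hmirw, hw_eq]
        simp [List.count_append, List.count_cons, m1c, m2c]
        omega
      · rw [hmirw, mir_glue _ _ m2D m1D, m1i, m2i, hw_eq]
end
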